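/- Orientable edge P-colorability characterization: Let G₀ be a simple graph on a finite vertex set V and P a finite poset. Then there exists an orientation G of G₀ whose 2-walks (edges) admit a P-coloring if and only if the chromatic number of G₀ is at most |A(P)|, the number of lower sets of P; moreover, when this holds such an orientation can be chosen acyclic. -/

import Mathlib

/-- A `k`-walk in the digraph `G` is a function `w : Fin k → V` such that
consecutive vertices are joined by an edge of `G`. -/
def IsWalk {V : Type*} (G : V → V → Prop) {k : ℕ} (w : Fin k → V) : Prop :=
  ∀ i : ℕ, ∀ h : i + 1 < k, G (w ⟨i, Nat.lt_of_succ_lt h⟩) (w ⟨i + 1, h⟩)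

theorem IsWalk.walkPrefix {V : Type*} {G : V → V → Prop} {k : ℕ} {u : Fin (k + 1) → V}
    (hu : IsWalk G u) : IsWalk G (fun i : Fin k => u i.castSucc) := by
  intro i h
  exact hu i (by omega)

theorem IsWalk.walkSuffix {V : Type*} {G : V → V → Prop} {k : ℕ} {u : Fin (k + 1) → V}
    (hu : IsWalk G u) : IsWalk G (fun i : Fin k => u i.succ) := by
  intro i h
  exact hu (i + 1) (by omega)

/-- The `k`-walks of `G`, as a subtype. -/
def Walks {V : Type*} (G : V → V → Prop) (k : ℕ) : Type _ :=
  {w : Fin k → V // IsWalk G w}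

/-- A `P`-coloring of the `k`-walks of `G`: for every `(k+1)`-walk `u`,
the color of its prefix `k`-walk is not `≤` the color of its suffix `k`-walk. -/
def IsPColoring {V : Type*} {P : Type*} [Preorder P] (G : V → V → Prop) (k : ℕ)
    (c : Walks G k → P) : Prop :=
  ∀ u : Walks G (k + 1),
    ¬ c ⟨fun i => u.1 i.castSucc, u.2.walkPrefix⟩ ≤ c ⟨fun i => u.1 i.succ, u.2.walkSuffix⟩

/-- `G` is an orientation of the simple graph `G₀`: for every edge `{u, v}` of `G₀`
exactly one of `G u v`, `G v u` holds, and every directed edge of `G` comes from an edge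
of `G₀`. -/
def IsOrientation {V : Type*} (G₀ : SimpleGraph V) (G : V → V → Prop) : Prop :=
  (∀ u v : V, G₀.Adj u v → Xor' (G u v) (G v u)) ∧ (∀ u v : V, G u v → G₀.Adj u v)

/-- `G` contains a directed cycle: vertices `v 0, …, v (m-1)` (`m ≥ 1`) with consecutive
directed edges and a directed edge from the last vertex back to the first. -/
def HasDirCycle {V : Type*} (G : V → V → Prop) : Prop :=
  ∃ (m : ℕ) (_ : 1 ≤ m) (v : Fin m → V),
    (∀ i : ℕ, ∀ h : i + 1 < m, G (v ⟨i, Nat.lt_of_succ_lt h⟩) (v ⟨i + 1, h⟩)) ∧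
    G (v ⟨m - 1, by omega⟩) (v ⟨0, by omega⟩)

-- auxiliary: fintype on lower sets
noncomputable instance lowerSetFintypeAux {P : Type*} [PartialOrder P] [Finite P] :
    Fintype (LowerSet P) := by
  have : Finite (LowerSet P) :=
    Finite.of_injective (fun s : LowerSet P => (s : Set P)) SetLike.coe_injective
  exact Fintype.ofFinite _

def mkWalk2 {V : Type*} {G : V → V → Prop} {u v : V} (h : G u v) : Walks G 2 :=
  ⟨fun i : Fin 2 => if (i : ℕ) = 0 then u else v, by
    intro i hi
    obtain rfl : i = 0 := by omega
    exact h⟩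

theorem coloring_exists {V P Q : Type*} [PartialOrder P] [LinearOrder Q]
    {G : V → V → Prop} (f : V → LowerSet P) (L : V → Q)
    (hmono : ∀ u v, f u ≤ f v → L u ≤ L v)
    (hG : ∀ u v, G u v → L v < L u) :
    ∃ c : Walks G 2 → P, IsPColoring G 2 c := by
  classical
  have hwalk : ∀ w : Walks G 2,
      ∃ p : P, p ∈ f (w.1 ⟨0, by omega⟩) ∧ p ∉ f (w.1 ⟨1, by omega⟩) := by
    intro w
    have hlt := hG _ _ (w.2 0 (by omega))
    by_contra hcon
    push_neg at hcon
    have hle : f (w.1 ⟨0, by omega⟩) ≤ f (w.1 ⟨1, by omega⟩) := LowerSet.coe_subset_coe.mp hcon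
    exact absurd (hmono _ _ hle) (not_le.mpr hlt)
  refine ⟨fun w => (hwalk w).choose, ?_⟩
  intro u hle
  have h1 := (hwalk ⟨fun i => u.1 i.castSucc, u.2.walkPrefix⟩).choose_spec
  have h2 := (hwalk ⟨fun i => u.1 i.succ, u.2.walkSuffix⟩).choose_spec
  exact h1.2 ((f _).lower hle h2.1)

theorem forward_aux {V : Type*} [Fintype V]
    (G₀ : SimpleGraph V) (P : Type*) [PartialOrder P] [Fintype P]
    (G : V → V → Prop) (hor : IsOrientation G₀ G)
    (c : Walks G 2 → P) (hc : IsPColoring G 2 c) :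
    G₀.chromaticNumber ≤ (Nat.card (LowerSet P) : ℕ∞) := by
  classical
  let f : V → LowerSet P := fun v =>
    ⟨{p | ∃ x, ∃ h : G v x, p ≤ c (mkWalk2 h)}, by
      intro a b hba ha
      obtain ⟨x, hx, hle⟩ := ha
      exact ⟨x, hx, hba.trans hle⟩⟩
  have hmem : ∀ {u v : V} (h : G u v), c (mkWalk2 h) ∈ f u := fun {u v} h => ⟨v, h, le_rfl⟩
  have hnmem : ∀ {u v : V} (h : G u v), c (mkWalk2 h) ∉ f v := by
    intro u v h hmem'
    obtain ⟨x, hx, hle⟩ := hmem'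
    let w3 : Fin 3 → V := fun i => if (i : ℕ) = 0 then u else if (i : ℕ) = 1 then v else x
    have hw3 : IsWalk G w3 := by
      intro i hi
      have : i = 0 ∨ i = 1 := by omega
      rcases this with rfl | rfl
      · exact h
      · exact hx
    refine absurd ?_ (hc ⟨w3, hw3⟩)
    convert hle using 2
    · exact congrArg c (Subtype.ext (by funext i; fin_cases i <;> rfl))
    · exact congrArg c (Subtype.ext (by funext i; fin_cases i <;> rfl))
  have hproper : ∀ {u v : V}, G₀.Adj u v → f u ≠ f v := by
    intro u v hadj
    rcases hor.1 u v hadj with ⟨hG, _⟩ | ⟨hG, _⟩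
    · exact fun heq => hnmem hG (heq ▸ hmem hG)
    · exact fun heq => hnmem hG (heq.symm ▸ hmem hG)
  have C : G₀.Coloring (LowerSet P) := SimpleGraph.Coloring.mk f hproper
  have hcol : G₀.Colorable (Fintype.card (LowerSet P)) := C.colorable
  rw [Nat.card_eq_fintype_card]
  exact (SimpleGraph.chromaticNumber_le_iff_colorable).mpr hcol

theorem backward_aux {V : Type*} [Fintype V]
    (G₀ : SimpleGraph V) (P : Type*) [PartialOrder P] [Fintype P]
    (h : G₀.chromaticNumber ≤ (Nat.card (LowerSet P) : ℕ∞)) :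
    ∃ G : V → V → Prop, IsOrientation G₀ G ∧ ¬ HasDirCycle G ∧
      ∃ c : Walks G 2 → P, IsPColoring G 2 c := by
  classical
  obtain ⟨C⟩ := (SimpleGraph.chromaticNumber_le_iff_colorable).mp h
  let e : Fin (Nat.card (LowerSet P)) ≃ LowerSet P :=
    (Fintype.equivFinOfCardEq (Nat.card_eq_fintype_card (α := LowerSet P)).symm).symm
  let f : V → LowerSet P := fun v => e (C v)
  let L : V → LinearExtension (LowerSet P) := fun v => toLinearExtension (f v)
  have hproper : ∀ u v : V, G₀.Adj u v → f u ≠ f v := fun u v huv heq =>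
    C.valid huv (e.injective heq)
  have hmono : ∀ u v : V, f u ≤ f v → L u ≤ L v := fun u v h' =>
    toLinearExtension.monotone h'
  have hinj : Function.Injective (toLinearExtension (α := LowerSet P)) := fun a b hab => hab
  have hLne : ∀ u v : V, G₀.Adj u v → L u ≠ L v := fun u v huv heq =>
    hproper u v huv (hinj heq)
  refine ⟨fun u v => G₀.Adj u v ∧ L v < L u, ⟨?_, fun u v h' => h'.1⟩, ?_, ?_⟩
  · intro u v hadj
    rcases lt_trichotomy (L u) (L v) with h1 | h1 | h1
    · exact Or.inr ⟨⟨hadj.symm, h1⟩, fun h2 => absurd h1 (not_lt.mpr h2.2.le)⟩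
    · exact absurd h1 (hLne u v hadj)
    · exact Or.inl ⟨⟨hadj, h1⟩, fun h2 => absurd h1 (not_lt.mpr h2.2.le)⟩
  · rintro ⟨m, hm, v, hcyc, hback⟩
    have key : ∀ i, ∀ hi : i < m, L (v ⟨i, hi⟩) ≤ L (v ⟨0, by omega⟩) := by
      intro i
      induction i with
      | zero => exact fun hi => le_rfl
      | succ n ih => exact fun hi => le_of_lt (lt_of_lt_of_le (hcyc n hi).2 (ih (by omega)))
    exact absurd hback.2 (not_lt.mpr (key (m - 1) (by omega)))
  · exact coloring_exists f L hmono (fun u v h' => h'.2)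

/-- **Orientable edge `P`-colorability characterization.** For a simple graph `G₀` on a
finite vertex set and a finite poset `P`: there is an orientation `G` of `G₀` whose
2-walks (edges) admit a `P`-coloring iff the chromatic number of `G₀` is at most
`|A(P)|`, the number of lower sets of `P`; moreover, when this holds the orientation can
be chosen acyclic. -/
theorem orientation_edge_coloring_characterization {V : Type*} [Fintype V]
    (G₀ : SimpleGraph V) (P : Type*) [PartialOrder P] [Fintype P] :
    ((∃ G : V → V → Prop, IsOrientation G₀ G ∧
        ∃ c : Walks G 2 → P, IsPColoring G 2 c) ↔
      G₀.chromaticNumber ≤ (Nat.card (LowerSet P) : ℕ∞)) ∧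
    (G₀.chromaticNumber ≤ (Nat.card (LowerSet P) : ℕ∞) →
      ∃ G : V → V → Prop, IsOrientation G₀ G ∧ ¬ HasDirCycle G ∧
        ∃ c : Walks G 2 → P, IsPColoring G 2 c) := by
  refine ⟨⟨?_, ?_⟩, fun h => backward_aux G₀ P h⟩
  · rintro ⟨G, hor, c, hc⟩
    exact forward_aux G₀ P G hor c hc
  · intro h
    obtain ⟨G, h1, _, h3⟩ := backward_aux G₀ P h
    exact ⟨G, h1, h3⟩
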